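/- For every λ > 0, the family l ↦ 2^l/(1 + e^{λ·2^l}) indexed by l ∈ ℤ is summable, and Σ_{l ∈ ℤ} 2^l/(1 + e^{λ·2^l}) = 1/λ. (That is, the mean of the binary expansion with Bernoulli digit parameters a_l = 1/(1+e^{λ·2^l}) equals the exponential mean 1/λ.) -/

import Mathlib

open Filter Real Topology

private lemma bem_exp_pos {lam : ℝ} (hlam : 0 < lam) (l : ℤ) :
    1 < Real.exp (lam * 2 ^ l) := by
  rw [show (1:ℝ) = Real.exp 0 from (Real.exp_zero).symm]
  exact Real.exp_lt_exp.mpr (by positivity)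

/-- terms telescope -/
private lemma bem_telescope {lam : ℝ} (hlam : 0 < lam) (l : ℤ) :
    (2 : ℝ) ^ l / (1 + Real.exp (lam * 2 ^ l)) =
      (2 : ℝ) ^ l / (Real.exp (lam * 2 ^ l) - 1)
        - (2 : ℝ) ^ (l + 1) / (Real.exp (lam * 2 ^ (l + 1)) - 1) := by
  have h1 := bem_exp_pos hlam l
  have h2 := bem_exp_pos hlam (l + 1)
  have ht : (2 : ℝ) ^ (l + 1) = 2 * 2 ^ l := by
    rw [zpow_add_one₀ (by norm_num : (2:ℝ) ≠ 0)]; ring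
  have he : Real.exp (lam * 2 ^ (l + 1)) = Real.exp (lam * 2 ^ l) ^ 2 := by
    rw [ht, ← Real.exp_nat_mul]; ring_nf
  rw [he] at h2 ⊢
  rw [ht]
  have hne1 : Real.exp (lam * 2 ^ l) - 1 ≠ 0 := by linarith
  have hne2 : Real.exp (lam * 2 ^ l) ^ 2 - 1 ≠ 0 := by nlinarith
  have hne3 : (1 : ℝ) + Real.exp (lam * 2 ^ l) ≠ 0 := by positivity
  rw [div_sub_div _ _ hne1 hne2, div_eq_div_iff hne3 (mul_ne_zero hne1 hne2)]
  ring

theorem binary_expansion_mean (lam : ℝ) (hlam : 0 < lam) :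
    Summable (fun l : ℤ => (2 : ℝ) ^ l / (1 + Real.exp (lam * 2 ^ l))) ∧
      ∑' l : ℤ, (2 : ℝ) ^ l / (1 + Real.exp (lam * 2 ^ l)) = 1 / lam := by
  set F : ℤ → ℝ := fun l => (2 : ℝ) ^ l / (1 + Real.exp (lam * 2 ^ l)) with hF
  set g : ℤ → ℝ := fun l => (2 : ℝ) ^ l / (Real.exp (lam * 2 ^ l) - 1) with hg
  have htel : ∀ l : ℤ, F l = g l - g (l + 1) := fun l => bem_telescope hlam l
  have hFnonneg : ∀ l : ℤ, 0 ≤ F l := by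
    intro l
    have : (0:ℝ) < 1 + Real.exp (lam * 2 ^ l) := by positivity
    positivity
  -- limit of g at +∞
  have hgen : Tendsto (fun x : ℝ => (Real.exp (lam * x) - 1) / x) atTop atTop := by
    have h1 : Tendsto (fun x : ℝ => Real.exp (lam * x) / (lam * x)) atTop atTop := by
      have := (Real.tendsto_exp_div_pow_atTop 1).comp
        (tendsto_id.const_mul_atTop hlam)
      simpa [Function.comp_def] using this
    have h2 : Tendsto (fun x : ℝ => Real.exp (lam * x) / x) atTop atTop := by
      refine (h1.const_mul_atTop hlam).congr' ?_
      filter_upwards [eventually_gt_atTop 0] with x hx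
      field_simp
    have h3 : Tendsto (fun x : ℝ => -(x⁻¹)) atTop (𝓝 (-0)) :=
      tendsto_inv_atTop_zero.neg
    refine (h3.add_atTop h2).congr' ?_
    filter_upwards [eventually_gt_atTop 0] with x hx
    field_simp
    ring
  have hgtop : Tendsto (fun n : ℕ => g n) atTop (𝓝 0) := by
    have hpow : Tendsto (fun n : ℕ => ((2:ℝ) ^ (n:ℤ))) atTop atTop := by
      have : Tendsto (fun n : ℕ => ((2:ℝ) ^ n)) atTop atTop :=
        tendsto_pow_atTop_atTop_of_one_lt (by norm_num)
      refine this.congr fun n => ?_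
      rw [zpow_natCast]
    refine (hgen.comp hpow).inv_tendsto_atTop.congr fun n => ?_
    simp only [Pi.inv_apply, Function.comp_apply, hg]
    rw [inv_div]
  -- limit of g at -∞
  have hslope : Tendsto (fun x : ℝ => x / (Real.exp x - 1)) (𝓝[≠] (0:ℝ)) (𝓝 1) := by
    have hd : HasDerivAt Real.exp 1 0 := by simpa using Real.hasDerivAt_exp 0
    have h0 := hasDerivAt_iff_tendsto_slope.mp hd
    have h1 : Tendsto (fun x : ℝ => (Real.exp x - 1) / x) (𝓝[≠] (0:ℝ)) (𝓝 1) := by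
      refine h0.congr fun x => ?_
      simp [slope_def_field, Real.exp_zero]
    have := h1.inv₀ (by norm_num)
    simpa [inv_div] using this
  have hgbot : Tendsto (fun n : ℕ => g (-(n+1))) atTop (𝓝 (1/lam)) := by
    have harg : Tendsto (fun n : ℕ => lam * (2:ℝ) ^ (-(n+1) : ℤ)) atTop (𝓝[≠] 0) := by
      apply tendsto_nhdsWithin_of_tendsto_nhds_of_eventually_within
      · have hfe : (fun n : ℕ => lam * (2:ℝ) ^ (-(n+1) : ℤ)) =
            fun n : ℕ => lam * ((2:ℝ)⁻¹) ^ (n+1) := by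
          funext n
          rw [show (-(n+1):ℤ) = -(((n+1):ℕ):ℤ) by push_cast; ring,
            zpow_neg, zpow_natCast, ← inv_pow]
        rw [hfe]
        have h2 : Tendsto (fun n : ℕ => ((2:ℝ)⁻¹) ^ (n+1)) atTop (𝓝 0) :=
          (tendsto_pow_atTop_nhds_zero_of_lt_one (by norm_num : (0:ℝ) ≤ 2⁻¹)
            (by norm_num : (2:ℝ)⁻¹ < 1)).comp (tendsto_add_atTop_nat 1)
        simpa using h2.const_mul lam
      · refine Eventually.of_forall fun n => ?_
        have hp : (0:ℝ) < lam * (2:ℝ) ^ (-(n+1) : ℤ) := by positivity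
        exact Set.mem_compl_singleton_iff.mpr (ne_of_gt hp)
    have hcomp := hslope.comp harg
    have h5 := hcomp.const_mul (1/lam)
    rw [mul_one] at h5
    refine h5.congr fun n => ?_
    have hp : (0:ℝ) < (2:ℝ) ^ (-(n+1) : ℤ) := by positivity
    have h1 := bem_exp_pos hlam (-(n+1))
    have hne : Real.exp (lam * 2 ^ (-(n+1):ℤ)) - 1 ≠ 0 := by linarith
    simp only [hg, Function.comp_apply]
    field_simp
  -- HasSum over ℕ part
  have hnat : HasSum (fun n : ℕ => F n) (g 0) := by
    rw [hasSum_iff_tendsto_nat_of_nonneg (fun n => hFnonneg n)]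
    have hsum : ∀ n : ℕ, ∑ i ∈ Finset.range n, F (i : ℤ) = g 0 - g n := by
      intro n
      have : ∀ i ∈ Finset.range n, F (i:ℤ) = (fun k : ℕ => g k) i - (fun k : ℕ => g k) (i+1) := by
        intro i _
        rw [htel]
        push_cast
        ring_nf
      rw [Finset.sum_congr rfl this, Finset.sum_range_sub' (fun k : ℕ => g k)]
      norm_num
    simp only [hsum]
    simpa using (tendsto_const_nhds (x := g 0)).sub hgtop
  -- HasSum over negative part
  have hneg : HasSum (fun n : ℕ => F (-(n+1))) (1/lam - g 0) := by
    rw [hasSum_iff_tendsto_nat_of_nonneg (fun n => hFnonneg _)]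
    have hsum : ∀ n : ℕ, ∑ i ∈ Finset.range n, F (-(i+1)) = g (-n) - g 0 := by
      intro n
      have : ∀ i ∈ Finset.range n, F (-(i+1:ℤ)) =
          (fun k : ℕ => g (-(k:ℤ))) (i+1) - (fun k : ℕ => g (-(k:ℤ))) i := by
        intro i _
        rw [htel]
        push_cast
        ring_nf
      rw [Finset.sum_congr rfl this, Finset.sum_range_sub (fun k : ℕ => g (-(k:ℤ)))]
      norm_num
    simp only [hsum]
    refine Tendsto.sub ?_ tendsto_const_nhds
    have := hgbot.comp (tendsto_sub_atTop_nat 1)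
    refine this.congr' ?_
    filter_upwards [eventually_ge_atTop 1] with n hn
    simp only [Function.comp_apply]
    congr 1
    omega
  have hint : HasSum F (1/lam) := by
    have := hnat.of_nat_of_neg_add_one (by exact_mod_cast hneg)
    simpa using this
  exact ⟨hint.summable, hint.tsum_eq⟩
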